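/- Let x = (3 − √5)/4. For a function f : [0,1]² → [0,1] define L_A(f) = (1/2)·[ ((1−2x)/(1−x))·(f(x,0) − 0)² + (x/(1−x))·(f(x,1−x) − (1−x))² ] + (1/2)·[ (x/(1−x))·(f(1−x,x) − x)² + ((1−2x)/(1−x))·(f(1−x,1) − 1)² ], and let L_B(f) be the same expression with the two arguments of f interchanged in every occurrence, i.e., L_B(f) = (1/2)·[ ((1−2x)/(1−x))·(f(0,x))² + (x/(1−x))·(f(1−x,x) − (1−x))² ] + (1/2)·[ (x/(1−x))·(f(x,1−x) − x)² + ((1−2x)/(1−x))·(f(1,1−x) − 1)² ]. Then for every f : [0,1]² → [0,1], (1/2)·L_A(f) + (1/2)·L_B(f) ≥ (5√5 − 11)/8. -/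
import Mathlib


noncomputable section

/-- The optimal adversarial parameter `x = (3 - √5)/4`. -/
def xopt : ℝ := (3 - Real.sqrt 5) / 4

/-- Relative loss of the aggregation scheme `f` on the Blackwell-ordered structure where
the less-informed expert is listed first. -/
def LA (f : ℝ → ℝ → ℝ) : ℝ :=
  (1/2) * (((1 - 2*xopt)/(1 - xopt)) * (f xopt 0 - 0)^2
      + (xopt/(1 - xopt)) * (f xopt (1 - xopt) - (1 - xopt))^2)
  + (1/2) * ((xopt/(1 - xopt)) * (f (1 - xopt) xopt - xopt)^2
      + ((1 - 2*xopt)/(1 - xopt)) * (f (1 - xopt) 1 - 1)^2)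

/-- Relative loss of `f` on the same structure with the two experts' roles swapped. -/
def LB (f : ℝ → ℝ → ℝ) : ℝ :=
  (1/2) * (((1 - 2*xopt)/(1 - xopt)) * (f 0 xopt)^2
      + (xopt/(1 - xopt)) * (f (1 - xopt) xopt - (1 - xopt))^2)
  + (1/2) * ((xopt/(1 - xopt)) * (f xopt (1 - xopt) - xopt)^2
      + ((1 - 2*xopt)/(1 - xopt)) * (f 1 (1 - xopt) - 1)^2)

theorem stmt_3 (f : ℝ → ℝ → ℝ)
    (hf : ∀ a b : ℝ, a ∈ Set.Icc (0:ℝ) 1 → b ∈ Set.Icc (0:ℝ) 1 → f a b ∈ Set.Icc (0:ℝ) 1) :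
    (1/2) * LA f + (1/2) * LB f ≥ (5 * Real.sqrt 5 - 11) / 8 := by
  set s := Real.sqrt 5 with hsdef
  have hs : s ^ 2 = 5 := Real.sq_sqrt (by norm_num)
  have hs0 : 0 ≤ s := Real.sqrt_nonneg 5
  have hs2 : 2 < s := by nlinarith
  have hs3 : s < 3 := by nlinarith
  have h1x : (1 : ℝ) - xopt = (1 + s) / 4 := by unfold xopt; ring
  have h1xne : (1 : ℝ) - xopt ≠ 0 := by rw [h1x]; positivity
  have hp : (1 - 2 * xopt) / (1 - xopt) = 3 - s := by
    rw [div_eq_iff h1xne, h1x]; unfold xopt; nlinarith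
  have hq : xopt / (1 - xopt) = s - 2 := by
    rw [div_eq_iff h1xne, h1x]; unfold xopt; nlinarith
  have hxv : xopt = (3 - s) / 4 := rfl
  unfold LA LB
  rw [hp, hq, hxv]
  nlinarith [sq_nonneg (f ((3-s)/4) 0), sq_nonneg (f (1 - (3-s)/4) 1 - 1),
    sq_nonneg (f 0 ((3-s)/4)), sq_nonneg (f 1 (1 - (3-s)/4) - 1),
    sq_nonneg (2 * f ((3-s)/4) (1 - (3-s)/4) - 1), sq_nonneg (2 * f (1 - (3-s)/4) ((3-s)/4) - 1),
    mul_nonneg (by nlinarith : (0:ℝ) ≤ 3 - s) (sq_nonneg (f ((3-s)/4) 0)),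
    mul_nonneg (by nlinarith : (0:ℝ) ≤ 3 - s) (sq_nonneg (f (1 - (3-s)/4) 1 - 1)),
    mul_nonneg (by nlinarith : (0:ℝ) ≤ 3 - s) (sq_nonneg (f 0 ((3-s)/4))),
    mul_nonneg (by nlinarith : (0:ℝ) ≤ 3 - s) (sq_nonneg (f 1 (1 - (3-s)/4) - 1)),
    mul_nonneg (by nlinarith : (0:ℝ) ≤ s - 2) (sq_nonneg (2 * f ((3-s)/4) (1 - (3-s)/4) - 1)),
    mul_nonneg (by nlinarith : (0:ℝ) ≤ s - 2) (sq_nonneg (2 * f (1 - (3-s)/4) ((3-s)/4) - 1))]
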